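/- The system of polynomial equations x·x' = 1, y·y' = 1, y·x²·y' = x³, z·(y·x·y'·x'·y·x'·y'·x − 1) = 1 in noncommuting variables x, x', y, y', z has no solution in the matrix ring M_c(F) for any field F and any c ≥ 1. -/

import Mathlib

theorem int_isJacobson : IsJacobsonRing ℤ := by
  rw [isJacobsonRing_iff_prime_eq]
  intro P hP
  by_cases hb : P = ⊥
  · subst hb
    refine le_antisymm ?_ Ideal.le_jacobson
    intro x hx
    rw [Ideal.mem_jacobson_bot] at hx
    simp only [Ideal.mem_bot]
    by_contra hx0
    have h1 := hx 1
    have h2 := hx (-1)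
    rw [mul_one] at h1
    rw [Int.isUnit_iff] at h1 h2
    rcases h1 with h1 | h1
    · rcases h2 with h2 | h2 <;> omega
    · rcases h2 with h2 | h2 <;> omega
  · haveI := IsPrime.to_maximal_ideal hb
    exact Ideal.jacobson_eq_self_of_isMaximal



theorem finite_of_field_finiteType (K : Type*) [Field K] [Algebra.FiniteType ℤ K] :
    Finite K := by
  haveI := int_isJacobson
  haveI : Module.Finite ℤ K := finite_of_finite_type_of_isJacobsonRing ℤ K
  haveI : Algebra.IsIntegral ℤ K := Algebra.IsIntegral.of_finite ℤ K
  rcases CharP.char_is_prime_or_zero K (ringChar K) with hp | hp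
  · haveI : Fact (Nat.Prime (ringChar K)) := ⟨hp⟩
    haveI := ZMod.algebra K (ringChar K)
    haveI : Module.Finite (ZMod (ringChar K)) K :=
      Module.Finite.of_restrictScalars_finite ℤ _ _
    exact Module.finite_of_finite (ZMod (ringChar K))
  · haveI : CharP K 0 := hp ▸ ringChar.charP K
    haveI : CharZero K := CharP.charP_to_charZero K
    have hinj : Function.Injective (algebraMap ℤ K) := by
      rw [algebraMap_int_eq]
      exact fun a b h => by simp only [eq_intCast] at h; exact_mod_cast h
    exact absurd (isField_of_isIntegral_of_isField hinj (Field.toIsField K)) Int.not_isField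


theorem bs_finite_group {G : Type*} [Group G] [Finite G] (X Y : G)
    (h : Y * X ^ 2 * Y⁻¹ = X ^ 3) :
    Y * X * Y⁻¹ * X⁻¹ * (Y * X⁻¹ * Y⁻¹) * X = 1 := by
  have hsc : SemiconjBy Y (X ^ 2) (X ^ 3) := by
    unfold SemiconjBy
    rw [← h]; group
  have horder : orderOf (X ^ 2) = orderOf (X ^ 3) := SemiconjBy.orderOf_eq Y hsc
  set n := orderOf X with hn
  have hnpos : 0 < n := orderOf_pos X
  rw [orderOf_pow, orderOf_pow] at horder
  have hg2 : n.gcd 2 = n.gcd 3 := by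
    have h2 : n.gcd 2 ∣ n := Nat.gcd_dvd_left n 2
    have h3 : n.gcd 3 ∣ n := Nat.gcd_dvd_left n 3
    have e2 : n / (n / n.gcd 2) = n.gcd 2 := Nat.div_div_self h2 hnpos.ne'
    have e3 : n / (n / n.gcd 3) = n.gcd 3 := Nat.div_div_self h3 hnpos.ne'
    rw [← e2, ← e3, horder]
  have hco2 : n.gcd 2 = 1 := by
    have h2 : n.gcd 2 ∣ 2 := Nat.gcd_dvd_right n 2
    have h3 : n.gcd 2 ∣ 3 := hg2 ▸ Nat.gcd_dvd_right n 3
    have h1 : n.gcd 2 ∣ Nat.gcd 2 3 := Nat.dvd_gcd h2 h3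
    simpa using h1
  have hodd : n % 2 = 1 := by
    have h2n : ¬ (2 ∣ n) := by
      intro hd
      have : (2 : ℕ) ∣ n.gcd 2 := Nat.dvd_gcd hd dvd_rfl
      omega
    omega
  obtain ⟨k, hk⟩ : ∃ k, 2 * k = n + 1 := ⟨(n + 1) / 2, by omega⟩
  have hXk : X ^ (2 * k) = X := by
    rw [hk, pow_succ, hn, pow_orderOf_eq_one, one_mul]
  have hA : Y * X * Y⁻¹ = X ^ (3 * k) := by
    conv_lhs => rw [← hXk]
    rw [pow_mul, ← conj_pow, h, ← pow_mul]
  have hAinv : Y * X⁻¹ * Y⁻¹ = (X ^ (3 * k))⁻¹ := by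
    rw [← hA]; group
  rw [hA, hAinv]
  have hcomm : X ^ (3 * k) * X⁻¹ = X⁻¹ * X ^ (3 * k) :=
    ((Commute.refl X).inv_right.pow_left _)
  rw [hcomm, mul_assoc, mul_assoc, mul_inv_cancel_left, inv_mul_cancel]



theorem quotient_finite {R : Type*} [CommRing R] [Algebra.FiniteType ℤ R]
    (m : Ideal R) [m.IsMaximal] : Finite (R ⧸ m) := by
  letI : Field (R ⧸ m) := Ideal.Quotient.field m
  haveI : Algebra.FiniteType ℤ (R ⧸ m) :=
    Algebra.FiniteType.of_surjective
      ((Ideal.Quotient.mk m).toIntAlgHom) Ideal.Quotient.mk_surjective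
  exact @finite_of_field_finiteType _ _ this

theorem aux_finite {K : Type*} [CommRing K] [Nontrivial K] [Finite K] {c : ℕ} (hc : 1 ≤ c)
    (a a' b b' d : Matrix (Fin c) (Fin c) K)
    (f1 : a * a' = 1) (f2 : b * b' = 1) (f3 : b * a ^ 2 * b' = a ^ 3)
    (f4 : d * (b * a * b' * a' * b * a' * b' * a - 1) = 1) : False := by
  classical
  let XU : (Matrix (Fin c) (Fin c) K)ˣ := ⟨a, a', f1, mul_eq_one_comm.mp f1⟩
  let YU : (Matrix (Fin c) (Fin c) K)ˣ := ⟨b, b', f2, mul_eq_one_comm.mp f2⟩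
  have hrel : YU * XU ^ 2 * YU⁻¹ = XU ^ 3 := by
    apply Units.ext
    show b * a ^ 2 * b' = a ^ 3
    exact f3
  have hw := bs_finite_group XU YU hrel
  have hw' : b * a * b' * a' * b * a' * b' * a = 1 := by
    have h := congrArg Units.val hw
    simpa [XU, YU, mul_assoc] using h
  rw [hw', sub_self, mul_zero] at f4
  have h00 : (0 : Matrix (Fin c) (Fin c) K) ⟨0, hc⟩ ⟨0, hc⟩ =
      (1 : Matrix (Fin c) (Fin c) K) ⟨0, hc⟩ ⟨0, hc⟩ := by rw [f4]
  rw [Matrix.zero_apply, Matrix.one_apply_eq] at h00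
  exact zero_ne_one h00

set_option maxHeartbeats 1000000 in
set_option synthInstance.maxHeartbeats 400000 in
theorem stmt_11 {F : Type} [Field F] (c : ℕ) (hc : 1 ≤ c)
    (x x' y y' z : Matrix (Fin c) (Fin c) F) :
    ¬ (x * x' = 1 ∧ y * y' = 1 ∧ y * x ^ 2 * y' = x ^ 3 ∧
        z * (y * x * y' * x' * y * x' * y' * x - 1) = 1) := by
  rintro ⟨hx, hy, hr, hz⟩
  classical
  let v : Fin 5 × Fin c × Fin c → F := fun p => ![x, x', y, y', z] p.1 p.2.1 p.2.2
  let R : Subalgebra ℤ F := (MvPolynomial.aeval v).range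
  haveI hft : Algebra.FiniteType ℤ R :=
    Algebra.FiniteType.of_surjective
      (MvPolynomial.aeval v).rangeRestrict (AlgHom.rangeRestrict_surjective _)
  have hmem : ∀ (q : Fin 5) (i j : Fin c), (![x, x', y, y', z] q) i j ∈ R :=
    fun q i j => ⟨MvPolynomial.X (q, i, j), by simp [v]⟩
  let L : Fin 5 → Matrix (Fin c) (Fin c) R := fun q i j => ⟨(![x, x', y, y', z] q) i j, hmem q i j⟩
  let Φ : Matrix (Fin c) (Fin c) R →+* Matrix (Fin c) (Fin c) F :=
    (Subalgebra.val R).toRingHom.mapMatrix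
  have hΦinj : Function.Injective Φ := fun A B hAB => by
    ext i j
    have h2 : (Φ A) i j = (Φ B) i j := by rw [hAB]
    exact h2
  have hΦL : ∀ q, Φ (L q) = ![x, x', y, y', z] q := fun q => by
    ext i j; rfl
  have e1 : L 0 * L 1 = 1 := hΦinj (by
    simp only [map_mul, map_one, hΦL]
    simpa using hx)
  have e2 : L 2 * L 3 = 1 := hΦinj (by
    simp only [map_mul, map_one, hΦL]
    simpa using hy)
  have e3 : L 2 * L 0 ^ 2 * L 3 = L 0 ^ 3 := hΦinj (by
    simp only [map_mul, map_pow, hΦL]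
    simpa using hr)
  have e4 : L 4 * (L 2 * L 0 * L 3 * L 1 * L 2 * L 1 * L 3 * L 0 - 1) = 1 := hΦinj (by
    simp only [map_mul, map_sub, map_one, hΦL]
    simpa using hz)
  haveI : Nontrivial R := nontrivial_of_ne 0 1 (fun h01 => by
    have := congrArg (Subalgebra.val R) h01
    simp at this)
  obtain ⟨m, hm⟩ := Ideal.exists_maximal R
  haveI := hm
  haveI : Nontrivial (R ⧸ m) := Ideal.Quotient.nontrivial_iff.mpr hm.ne_top
  haveI : Finite (R ⧸ m) := quotient_finite m
  let Ψ : Matrix (Fin c) (Fin c) R →+* Matrix (Fin c) (Fin c) (R ⧸ m) :=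
    (Ideal.Quotient.mk m).mapMatrix
  refine aux_finite hc (Ψ (L 0)) (Ψ (L 1)) (Ψ (L 2)) (Ψ (L 3)) (Ψ (L 4)) ?_ ?_ ?_ ?_
  · rw [← map_mul, e1, map_one]
  · rw [← map_mul, e2, map_one]
  · have h := congrArg Ψ e3
    simp only [map_mul, map_pow] at h
    exact h
  · have h := congrArg Ψ e4
    simp only [map_mul, map_sub, map_one] at h
    exact h
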